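/- arXiv:1905.10991 — 4 statements merged into one kernel-verified Lean document; each statement's English description precedes it below -/
import Mathlib

section
/- Let k ≥ 1, let (i_1,…,i_k) be a strictly increasing k-tuple of nonnegative integers, let σ ∈ Σ_k, and let 1 ≤ m ≤ k−1. Then the two conditions σ̂(i_1) < … < σ̂(i_m) and σ̂(i_{m+1}) < … < σ̂(i_k) hold if and only if the two conditions σ(i_1) < … < σ(i_m) and σ(i_{m+1}) < … < σ(i_k) hold. -/
namespace Paper

/-- The hatted tuple `(σ̂(i_1), …, σ̂(i_k))`: the `s`-th component of the permuted tuple is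
`i (σ s)`, and the hat subtracts the number of strictly smaller entries to the right. -/
def hat {k : ℕ} (i : Fin k → ℕ) (σ : Equiv.Perm (Fin k)) (s : Fin k) : ℕ :=
  i (σ s) - (Finset.univ.filter (fun r : Fin k => s < r ∧ i (σ r) < i (σ s))).card

/-- `IncOn f lo hi` : the tuple `f` is strictly increasing on the (0-indexed) positions
`lo ≤ a < b < hi`. -/
def IncOn {k : ℕ} (f : Fin k → ℕ) (lo hi : ℕ) : Prop :=
  ∀ a b : Fin k, lo ≤ (a : ℕ) → a < b → (b : ℕ) < hi → f a < f b

end Paper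
namespace Paper

private lemma mono_add {k : ℕ} {i : Fin k → ℕ} (hi : StrictMono i) :
    ∀ d : ℕ, ∀ u v : Fin k, (u : ℕ) + d = (v : ℕ) → i u + d ≤ i v := by
  intro d
  induction d with
  | zero =>
    intro u v h
    have : u = v := Fin.ext (by omega)
    simp [this]
  | succ n ih =>
    intro u v h
    have hn : (u : ℕ) + n < k := by have := v.isLt; omega
    have h1 := ih u ⟨(u : ℕ) + n, hn⟩ rfl
    have h2 : i ⟨(u : ℕ) + n, hn⟩ < i v := hi (by simp [Fin.lt_def]; omega)
    omega

private lemma self_le {k : ℕ} {i : Fin k → ℕ} (hi : StrictMono i) (t : Fin k) :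
    (t : ℕ) ≤ i t := by
  have h0 : 0 < k := t.pos
  have := mono_add hi (t : ℕ) ⟨0, h0⟩ t (by simp)
  omega

private lemma card_filter_le {k : ℕ} {i : Fin k → ℕ} (hi : StrictMono i)
    (σ : Equiv.Perm (Fin k)) (s : Fin k) :
    (Finset.univ.filter (fun r : Fin k => s < r ∧ i (σ r) < i (σ s))).card ≤ i (σ s) := by
  calc (Finset.univ.filter (fun r : Fin k => s < r ∧ i (σ r) < i (σ s))).card
      ≤ (Finset.range ((σ s : ℕ))).card := by
        apply Finset.card_le_card_of_injOn (fun r => ((σ r : ℕ)))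
        · intro r hr
          simp only [Finset.mem_coe, Finset.mem_filter, Finset.mem_univ, true_and] at hr
          have : σ r < σ s := hi.lt_iff_lt.mp hr.2
          simpa using this
        · intro x _ y _ hxy
          exact σ.injective (Fin.ext hxy)
    _ = (σ s : ℕ) := Finset.card_range _
    _ ≤ i (σ s) := self_le hi (σ s)

private lemma card_between {k : ℕ} (σ : Equiv.Perm (Fin k)) (b x y : Fin k) :
    (Finset.univ.filter (fun r : Fin k => b < r ∧ x < σ r ∧ σ r < y)).card
      ≤ (y : ℕ) - (x : ℕ) - 1 := by
  calc (Finset.univ.filter (fun r : Fin k => b < r ∧ x < σ r ∧ σ r < y)).card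
      ≤ (Finset.Ioo (x : ℕ) (y : ℕ)).card := by
        apply Finset.card_le_card_of_injOn (fun r => ((σ r : ℕ)))
        · intro r hr
          simp only [Finset.mem_coe, Finset.mem_filter, Finset.mem_univ, true_and] at hr
          simp only [Finset.mem_coe, Finset.mem_Ioo]
          exact ⟨hr.2.1, hr.2.2⟩
        · intro p _ q _ hpq
          exact σ.injective (Fin.ext hpq)
    _ = (y : ℕ) - (x : ℕ) - 1 := Nat.card_Ioo _ _

private lemma hat_adj {k : ℕ} {i : Fin k → ℕ} (hi : StrictMono i)
    (σ : Equiv.Perm (Fin k)) (a b : Fin k) (hab : (b : ℕ) = (a : ℕ) + 1) :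
    (hat i σ a < hat i σ b ↔ i (σ a) < i (σ b)) := by
  have hαa := card_filter_le hi σ a
  have hβb := card_filter_le hi σ b
  have hne : a ≠ b := by intro h; rw [h] at hab; omega
  have hσne : σ a ≠ σ b := fun h => hne (σ.injective h)
  rcases lt_or_gt_of_ne hσne with hlt | hgt
  · -- σ a < σ b : both sides true
    have hib : i (σ a) < i (σ b) := hi hlt
    have hsub : (Finset.univ.filter (fun r : Fin k => b < r ∧ i (σ r) < i (σ b)))
        ⊆ (Finset.univ.filter (fun r : Fin k => a < r ∧ i (σ r) < i (σ a)))
          ∪ (Finset.univ.filter (fun r : Fin k => b < r ∧ σ a < σ r ∧ σ r < σ b)) := by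
      intro r hr
      simp only [Finset.mem_filter, Finset.mem_univ, true_and, Finset.mem_union] at hr ⊢
      obtain ⟨hbr, hrb⟩ := hr
      have hrb' : σ r < σ b := hi.lt_iff_lt.mp hrb
      have har : a < r := by rw [Fin.lt_def] at hbr ⊢; omega
      have hra : r ≠ a := by intro h; rw [h, Fin.lt_def] at hbr; omega
      rcases lt_trichotomy (σ r) (σ a) with h | h | h
      · exact Or.inl ⟨har, hi h⟩
      · exact absurd (σ.injective h) hra
      · exact Or.inr ⟨hbr, h, hrb'⟩
    have hcard := (Finset.card_le_card hsub).trans (Finset.card_union_le _ _)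
    have hγ := card_between σ b (σ a) (σ b)
    have hmono := mono_add hi ((σ b : ℕ) - (σ a : ℕ)) (σ a) (σ b)
      (by rw [Fin.lt_def] at hlt; omega)
    have hvals : (σ a : ℕ) < (σ b : ℕ) := hlt
    simp only [hat]
    constructor
    · intro _; exact hib
    · intro _; omega
  · -- σ b < σ a : both sides false
    have hib : i (σ b) < i (σ a) := hi hgt
    have hsub : (Finset.univ.filter (fun r : Fin k => a < r ∧ i (σ r) < i (σ a)))
        ⊆ insert b ((Finset.univ.filter (fun r : Fin k => b < r ∧ i (σ r) < i (σ b)))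
          ∪ (Finset.univ.filter (fun r : Fin k => b < r ∧ σ b < σ r ∧ σ r < σ a))) := by
      intro r hr
      simp only [Finset.mem_filter, Finset.mem_univ, true_and, Finset.mem_union,
        Finset.mem_insert] at hr ⊢
      obtain ⟨har, hra⟩ := hr
      by_cases hrb : r = b
      · exact Or.inl hrb
      · have hbr : b < r := by
          rw [Fin.lt_def] at har ⊢
          have : (r : ℕ) ≠ (b : ℕ) := fun h => hrb (Fin.ext h)
          omega
        have hra' : σ r < σ a := hi.lt_iff_lt.mp hra
        rcases lt_trichotomy (σ r) (σ b) with h | h | h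
        · exact Or.inr (Or.inl ⟨hbr, hi h⟩)
        · exact absurd (σ.injective h) hrb
        · exact Or.inr (Or.inr ⟨hbr, h, hra'⟩)
    have hcard := (Finset.card_le_card hsub).trans
      ((Finset.card_insert_le _ _).trans (Nat.add_le_add_right (Finset.card_union_le _ _) 1))
    have hγ := card_between σ b (σ b) (σ a)
    have hmono := mono_add hi ((σ a : ℕ) - (σ b : ℕ)) (σ b) (σ a)
      (by have : (σ b : ℕ) < (σ a : ℕ) := hgt; omega)
    have hvals : (σ b : ℕ) < (σ a : ℕ) := hgt
    simp only [hat]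
    constructor
    · intro h; omega
    · intro h; omega

private lemma incOn_iff_adj {k : ℕ} (f : Fin k → ℕ) (lo hi : ℕ) (hhi : hi ≤ k) :
    IncOn f lo hi ↔
      ∀ a b : Fin k, lo ≤ (a : ℕ) → (b : ℕ) = (a : ℕ) + 1 → (b : ℕ) < hi → f a < f b := by
  constructor
  · intro h a b ha hab hb
    exact h a b ha (by rw [Fin.lt_def]; omega) hb
  · intro h
    have key : ∀ n : ℕ, ∀ a b : Fin k, lo ≤ (a : ℕ) → (b : ℕ) = (a : ℕ) + 1 + n →
        (b : ℕ) < hi → f a < f b := by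
      intro n
      induction n with
      | zero => intro a b ha hab hb; exact h a b ha (by omega) hb
      | succ n ih =>
        intro a b ha hab hb
        have hlt : (a : ℕ) + 1 < k := by have := b.isLt; omega
        have h1 : f a < f ⟨(a : ℕ) + 1, hlt⟩ := h a ⟨(a : ℕ) + 1, hlt⟩ ha rfl (by simp; omega)
        have h2 : f ⟨(a : ℕ) + 1, hlt⟩ < f b := ih ⟨(a : ℕ) + 1, hlt⟩ b (by simp; omega)
          (by simp; omega) hb
        omega
    intro a b ha hab hb
    have : (b : ℕ) = (a : ℕ) + 1 + ((b : ℕ) - (a : ℕ) - 1) := by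
      rw [Fin.lt_def] at hab; omega
    exact key _ a b ha this hb

private lemma incOn_hat_iff {k : ℕ} {i : Fin k → ℕ} (hi : StrictMono i)
    (σ : Equiv.Perm (Fin k)) (lo hi' : ℕ) (hhi : hi' ≤ k) :
    IncOn (hat i σ) lo hi' ↔ IncOn (fun s => i (σ s)) lo hi' := by
  rw [incOn_iff_adj _ _ _ hhi, incOn_iff_adj _ _ _ hhi]
  constructor
  · intro h a b ha hab hb
    exact (hat_adj hi σ a b hab).mp (h a b ha hab hb)
  · intro h a b ha hab hb
    exact (hat_adj hi σ a b hab).mpr (h a b ha hab hb)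

/-- For a strictly increasing `k`-tuple `i`, a permutation `σ ∈ Σ_k` and
`1 ≤ m ≤ k-1`, the hatted tuple is strictly increasing on the first `m` and on the last
`k - m` positions if and only if the permuted tuple `s ↦ i (σ s)` is. -/
theorem hat_increasing_iff_increasing
    (k : ℕ) (hk : 1 ≤ k) (i : Fin k → ℕ) (hi : StrictMono i)
    (σ : Equiv.Perm (Fin k)) (m : ℕ) (hm1 : 1 ≤ m) (hm2 : m ≤ k - 1) :
    (IncOn (hat i σ) 0 m ∧ IncOn (hat i σ) m k) ↔
      (IncOn (fun s => i (σ s)) 0 m ∧ IncOn (fun s => i (σ s)) m k) := by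
  rw [incOn_hat_iff hi σ 0 m (by omega), incOn_hat_iff hi σ m k le_rfl]

end Paper
end

section
/- Let k ≥ 1, let (i_1,…,i_k) be a strictly increasing k-tuple of nonnegative integers, let σ ∈ Σ_k, and let 1 ≤ m ≤ k−1. If σ̂(i_1) < … < σ̂(i_m) and σ̂(i_{m+1}) < … < σ̂(i_k), then the last k−m hatted values coincide with the unhatted ones: σ̂(i_s) = σ(i_s) for all m+1 ≤ s ≤ k. -/
namespace Paper

/-- For a strictly increasing `k`-tuple `i`, a permutation `σ ∈ Σ_k` and
`1 ≤ m ≤ k-1`, if the hatted tuple is strictly increasing on the first `m` and on the last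
`k - m` positions, then on the last `k - m` positions the hatted values coincide with the
unhatted ones: `σ̂(i_s) = σ(i_s)` for `m + 1 ≤ s ≤ k` (0-indexed: `m ≤ s`). -/
theorem hat_eq_on_second_block
    (k : ℕ) (hk : 1 ≤ k) (i : Fin k → ℕ) (hi : StrictMono i)
    (σ : Equiv.Perm (Fin k)) (m : ℕ) (hm1 : 1 ≤ m) (hm2 : m ≤ k - 1)
    (h1 : IncOn (hat i σ) 0 m) (h2 : IncOn (hat i σ) m k) :
    ∀ s : Fin k, m ≤ (s : ℕ) → hat i σ s = i (σ s) := by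
  -- Key claim: for `s ≥ m`, there is no inversion to the right of position `s`.
  have key : ∀ n : ℕ, ∀ s : Fin k, k - (s : ℕ) ≤ n → m ≤ (s : ℕ) →
      ∀ r : Fin k, s < r → i (σ s) < i (σ r) := by
    intro n
    induction n with
    | zero =>
      intro s hs
      have := s.isLt
      omega
    | succ n ih =>
      intro s hsn hms r hr
      by_contra hcon
      push_neg at hcon
      have hner : σ r ≠ σ s := fun h => absurd (σ.injective h) (Fin.ne_of_gt hr)
      have hlt : i (σ r) < i (σ s) :=
        hcon.lt_of_ne (fun h => hner (hi.injective h))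
      have hrk : (r : ℕ) < k := r.isLt
      have hsr : (s : ℕ) < (r : ℕ) := hr
      -- the position s+1
      set s' : Fin k := ⟨(s : ℕ) + 1, by omega⟩ with hs'
      have hss' : s < s' := by
        simp [Fin.lt_def, hs']
      -- no inversions to the right of s'
      have hPs' : ∀ r' : Fin k, s' < r' → i (σ s') < i (σ r') := by
        refine ih s' ?_ ?_
        · simp only [hs']; omega
        · simp only [hs']; omega
      -- hence hat at s' is unhatted
      have hfilter' :
          (Finset.univ.filter (fun r' : Fin k => s' < r' ∧ i (σ r') < i (σ s'))) = ∅ := by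
        refine Finset.filter_eq_empty_iff.mpr ?_
        rintro r' - ⟨h1', h2'⟩
        exact absurd (hPs' r' h1') (by omega)
      have hhat' : hat i σ s' = i (σ s') := by
        simp [hat, hfilter']
      -- the set of inversions at s
      set S : Finset (Fin k) :=
        Finset.univ.filter (fun r' : Fin k => s < r' ∧ i (σ r') < i (σ s)) with hS
      have hrS : r ∈ S := by
        simp [hS, hr, hlt]
      have hc1 : 1 ≤ S.card := Finset.card_pos.mpr ⟨r, hrS⟩
      -- each inversion r' maps to a distinct value in [i (σ s'), i (σ s))
      have hcard : S.card ≤ (Finset.Ico (i (σ s')) (i (σ s))).card := by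
        refine Finset.card_le_card_of_injOn (fun r' => i (σ r')) ?_ ?_
        · intro r' hr'
          simp only [hS, Finset.mem_coe, Finset.mem_filter] at hr'
          obtain ⟨-, hsr', hir'⟩ := hr'
          have hle : s' ≤ r' := by
            have : (s : ℕ) < (r' : ℕ) := hsr'
            simp [Fin.le_def, hs']; omega
          rcases eq_or_lt_of_le hle with h | h
          · subst h; exact Finset.mem_Ico.mpr ⟨le_rfl, hir'⟩
          · exact Finset.mem_Ico.mpr ⟨(hPs' r' h).le, hir'⟩
        · intro a _ b _ hab
          exact σ.injective (hi.injective hab)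
      rw [Nat.card_Ico] at hcard
      -- strict increase of the hatted tuple from s to s'
      have hhat : hat i σ s < hat i σ s' := h2 s s' hms hss' s'.isLt
      have hdef : hat i σ s = i (σ s) - S.card := rfl
      -- the value at s' is below the value at s
      have hBA : i (σ s') ≤ i (σ s) := by
        have hle : s' ≤ r := by
          simp [Fin.le_def, hs']; omega
        rcases eq_or_lt_of_le hle with h | h
        · rw [← h] at hlt; omega
        · exact le_trans (hPs' r h).le hlt.le
      rw [hdef, hhat'] at hhat
      omega
  intro s hms
  have hP := key k s (by omega) hms
  have hfilter :
      (Finset.univ.filter (fun r' : Fin k => s < r' ∧ i (σ r') < i (σ s))) = ∅ := by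
    refine Finset.filter_eq_empty_iff.mpr ?_
    rintro r' - ⟨h1', h2'⟩
    exact absurd (hP r' h1') (by omega)
  simp [hat, hfilter]

end Paper
end

section
/- Let k ≥ 1 and 0 ≤ m ≤ k, and let (j_1,…,j_m) and (j_{m+1},…,j_k) be two strictly increasing tuples of nonnegative integers (either may be empty). Then there exist a strictly increasing k-tuple (i_1,…,i_k) of nonnegative integers and a permutation σ ∈ Σ_k satisfying σ(i_1) < … < σ(i_m) and σ(i_{m+1}) < … < σ(i_k), such that σ̂(i_s) = j_s for all 1 ≤ s ≤ k; moreover the pair ((i_1,…,i_k), σ) with these properties is unique. -/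
namespace Paper

section Aux

variable {k : ℕ} (m : ℕ) (j : Fin k → ℕ)

/-- number of second-block entries with value `< n` -/
def gc (n : ℕ) : ℕ :=
  (Finset.univ.filter (fun r : Fin k => m ≤ (r : ℕ) ∧ j r < n)).card

/-- `n` minus the number of second-block entries `< n` -/
def fc (n : ℕ) : ℕ := n - gc m j n

variable {m j}

lemma jinj (h2 : IncOn j m k) {r r' : Fin k} (hr : m ≤ (r : ℕ)) (hr' : m ≤ (r' : ℕ))
    (h : j r = j r') : r = r' := by
  rcases lt_trichotomy r r' with hlt | he | hgt
  · exact absurd (h2 r r' hr hlt r'.isLt) (by omega)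
  · exact he
  · exact absurd (h2 r' r hr' hgt r.isLt) (by omega)

lemma gc_le (h2 : IncOn j m k) (n : ℕ) : gc m j n ≤ n := by
  have := Finset.card_le_card_of_injOn (f := fun r : Fin k => j r)
    (s := Finset.univ.filter (fun r : Fin k => m ≤ (r : ℕ) ∧ j r < n))
    (t := Finset.range n)
    (by intro r hr; simp only [Finset.mem_coe, Finset.mem_filter] at hr; simp [hr.2.2])
    (by intro r hr r' hr' h
        simp only [Finset.mem_coe, Finset.mem_filter] at hr hr'
        exact jinj h2 hr.2.1 hr'.2.1 h)
  simpa [gc] using this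

lemma gc_le_k (n : ℕ) : gc m j n ≤ k := by
  simpa [gc] using Finset.card_le_card (Finset.filter_subset _ (Finset.univ : Finset (Fin k)))

lemma gc_succ (n : ℕ) : gc m j (n + 1) =
    gc m j n + (Finset.univ.filter (fun r : Fin k => m ≤ (r : ℕ) ∧ j r = n)).card := by
  rw [gc, gc, ← Finset.card_union_of_disjoint (by
      simp only [Finset.disjoint_filter]
      intro r _ h h'; omega)]
  congr 1
  ext r
  simp only [Finset.mem_union, Finset.mem_filter, Finset.mem_univ, true_and]
  omega

lemma card_eq_le_one (h2 : IncOn j m k) (n : ℕ) :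
    (Finset.univ.filter (fun r : Fin k => m ≤ (r : ℕ) ∧ j r = n)).card ≤ 1 := by
  apply Finset.card_le_one.2
  intro r hr r' hr'
  simp only [Finset.mem_filter] at hr hr'
  exact jinj h2 hr.2.1 hr'.2.1 (by omega)

lemma gc_succ_not (n : ℕ) (h : ¬∃ r : Fin k, m ≤ (r : ℕ) ∧ j r = n) :
    gc m j (n + 1) = gc m j n := by
  rw [gc_succ]
  have : (Finset.univ.filter (fun r : Fin k => m ≤ (r : ℕ) ∧ j r = n)) = ∅ := by
    apply Finset.filter_false_of_mem
    intro r _ hr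
    exact h ⟨r, hr⟩
  simp [this]

lemma gc_succ_mem (h2 : IncOn j m k) (n : ℕ) (h : ∃ r : Fin k, m ≤ (r : ℕ) ∧ j r = n) :
    gc m j (n + 1) = gc m j n + 1 := by
  rw [gc_succ]
  congr 1
  refine le_antisymm (card_eq_le_one h2 n) ?_
  obtain ⟨r, hr⟩ := h
  exact Finset.card_pos.2 ⟨r, by simp [hr.1, hr.2]⟩

lemma fc_mono (h2 : IncOn j m k) : Monotone (fc m j) := by
  apply monotone_nat_of_le_succ
  intro n
  have h1 := gc_le h2 (m := m) (j := j) n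
  have h2' := gc_succ n (m := m) (j := j)
  have h3 := card_eq_le_one h2 (m := m) (j := j) n
  simp only [fc]; omega

lemma fc_lower (n : ℕ) : n ≤ fc m j n + k := by
  have := gc_le_k (m := m) (j := j) n
  simp only [fc]; omega

lemma fc_succ_not (h2 : IncOn j m k) (n : ℕ) (h : ¬∃ r : Fin k, m ≤ (r : ℕ) ∧ j r = n) :
    fc m j (n + 1) = fc m j n + 1 := by
  have h1 := gc_succ_not (m := m) (j := j) n h
  have h2 := gc_le h2 (m := m) (j := j) n
  simp only [fc]; omega

lemma fc_surj (h2 : IncOn j m k) (t : ℕ) : ∃ n, fc m j n = t := by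
  have hex : ∃ n, t ≤ fc m j n := ⟨t + k, by have := fc_lower (m := m) (j := j) (t + k); omega⟩
  have hspec := Nat.find_spec hex
  rcases hn : Nat.find hex with _ | n'
  · rw [hn] at hspec
    have : fc m j 0 = 0 := by simp [fc]
    exact ⟨0, by omega⟩
  · rw [hn] at hspec
    have hmin : ¬ t ≤ fc m j n' := Nat.find_min hex (by omega)
    have hstep : fc m j (n' + 1) ≤ fc m j n' + 1 := by
      have h1 := gc_le h2 (m := m) (j := j) n'
      have h2' := gc_succ n' (m := m) (j := j)
      simp only [fc]; omega
    exact ⟨n' + 1, by omega⟩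

/-- the canonical value for the first block -/
def Nv (t : ℕ) : ℕ := Nat.findGreatest (fun n => fc m j n = t) (t + k)

lemma Nv_spec (h2 : IncOn j m k) (t : ℕ) : fc m j (Nv (m := m) (j := j) t) = t := by
  obtain ⟨n, hn⟩ := fc_surj h2 t
  have hb : n ≤ t + k := by have := fc_lower (m := m) (j := j) n; omega
  exact Nat.findGreatest_spec (P := fun n => fc m j n = t) hb hn

lemma Nv_max {t n : ℕ} (hn : fc m j n = t) : n ≤ Nv (m := m) (j := j) t := by
  have hb : n ≤ t + k := by have := fc_lower (m := m) (j := j) n; omega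
  exact Nat.le_findGreatest (P := fun n => fc m j n = t) hb hn

lemma Nv_notJ (h2 : IncOn j m k) (t : ℕ) : ¬∃ r : Fin k, m ≤ (r : ℕ) ∧ j r = Nv (m := m) (j := j) t := by
  intro hmem
  set N := Nv (m := m) (j := j) t with hN
  have h1 : fc m j N = t := Nv_spec h2 t
  have h2' : gc m j (N + 1) = gc m j N + 1 := gc_succ_mem h2 N hmem
  have h3 : gc m j N ≤ N := gc_le h2 N
  have h4 : fc m j (N + 1) = t := by simp only [fc] at h1 ⊢; omega
  have := Nv_max (m := m) (j := j) h4
  omega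

lemma Nv_unique (h2 : IncOn j m k) {t n : ℕ} (hn : fc m j n = t)
    (hnotJ : ¬∃ r : Fin k, m ≤ (r : ℕ) ∧ j r = n) : n = Nv (m := m) (j := j) t := by
  have hle := Nv_max (m := m) (j := j) hn
  rcases eq_or_lt_of_le hle with h | h
  · exact h
  · exfalso
    have hsucc : fc m j (n + 1) = t + 1 := by rw [fc_succ_not h2 n hnotJ, hn]
    have := fc_mono h2 (show n + 1 ≤ Nv (m := m) (j := j) t by omega)
    rw [hsucc, Nv_spec h2 t] at this
    omega

end Aux

/-- Given `k ≥ 1`, `0 ≤ m ≤ k` and a `k`-tuple `j` of nonnegative integers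
which is strictly increasing on the first `m` and on the last `k - m` positions, there is a
unique pair `(i, σ)` of a strictly increasing `k`-tuple `i` and a permutation `σ ∈ Σ_k` with
the permuted tuple strictly increasing on the first `m` and on the last `k - m` positions,
such that `σ̂(i_s) = j_s` for all `s`. -/
theorem exists_unique_tuple_and_perm_with_hat
    (k m : ℕ) (hk : 1 ≤ k) (hm : m ≤ k) (j : Fin k → ℕ)
    (h1 : IncOn j 0 m) (h2 : IncOn j m k) :
    ∃! p : (Fin k → ℕ) × Equiv.Perm (Fin k),
      StrictMono p.1 ∧ IncOn (fun s => p.1 (p.2 s)) 0 m ∧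
        IncOn (fun s => p.1 (p.2 s)) m k ∧ ∀ s, hat p.1 p.2 s = j s := by
  classical
  -- the target values
  set v : Fin k → ℕ := fun s => if (s : ℕ) < m then Nv (m := m) (j := j) (j s) else j s with hv
  have hv_lt : ∀ s : Fin k, (s : ℕ) < m → fc m j (v s) = j s := by
    intro s hs; simp only [hv, if_pos hs]; exact Nv_spec h2 _
  have hv_notJ : ∀ s : Fin k, (s : ℕ) < m → ¬∃ r : Fin k, m ≤ (r : ℕ) ∧ j r = v s := by
    intro s hs; simp only [hv, if_pos hs]; exact Nv_notJ h2 _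
  have hv_ge : ∀ s : Fin k, m ≤ (s : ℕ) → v s = j s := by
    intro s hs; simp only [hv]; rw [if_neg (Nat.not_lt.2 hs)]
  have hv_char : ∀ (s : Fin k) (n : ℕ), (s : ℕ) < m → fc m j n = j s →
      (¬∃ r : Fin k, m ≤ (r : ℕ) ∧ j r = n) → n = v s := by
    intro s n hs hn hnotJ
    simp only [hv, if_pos hs]
    exact Nv_unique h2 hn hnotJ
  -- monotonicity on the first block
  have hv_mono1 : ∀ a b : Fin k, a < b → (b : ℕ) < m → v a < v b := by
    intro a b hab hbm
    have ham : (a : ℕ) < m := lt_trans (by exact_mod_cast hab) hbm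
    have hj : j a < j b := h1 a b (by omega) hab hbm
    by_contra hle
    push_neg at hle
    have := fc_mono h2 hle
    rw [hv_lt a ham, hv_lt b hbm] at this
    omega
  -- injectivity of v
  have hvinj : Function.Injective v := by
    intro a b hab
    by_contra hne
    rcases lt_or_ge (a : ℕ) m with ham | ham
    · rcases lt_or_ge (b : ℕ) m with hbm | hbm
      · rcases lt_trichotomy a b with h | h | h
        · exact absurd hab (by have := hv_mono1 a b h hbm; omega)
        · exact hne h
        · exact absurd hab (by have := hv_mono1 b a h ham; omega)
      · exact hv_notJ a ham ⟨b, hbm, by rw [← hv_ge b hbm, hab]⟩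
    · rcases lt_or_ge (b : ℕ) m with hbm | hbm
      · exact hv_notJ b hbm ⟨a, ham, by rw [← hv_ge a ham, hab]⟩
      · exact hne (jinj h2 ham hbm (by rw [← hv_ge a ham, ← hv_ge b hbm, hab]))
  -- monotonicity on the second block
  have hv_mono2 : ∀ a b : Fin k, m ≤ (a : ℕ) → a < b → v a < v b := by
    intro a b ham hab
    have hbm : m ≤ (b : ℕ) := by have : (a:ℕ) < (b:ℕ) := hab; omega
    rw [hv_ge a ham, hv_ge b hbm]
    exact h2 a b ham hab b.isLt
  -- build i and σ
  set T : Finset ℕ := Finset.image v Finset.univ with hT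
  have hTcard : T.card = k := by
    rw [hT, Finset.card_image_of_injective _ hvinj, Finset.card_univ, Fintype.card_fin]
  set e := T.orderIsoOfFin hTcard with he
  set i : Fin k → ℕ := fun t => (e t : ℕ) with hi
  have hmem : ∀ s, v s ∈ T := fun s => Finset.mem_image_of_mem v (Finset.mem_univ s)
  have hτinj : Function.Injective (fun s => e.symm ⟨v s, hmem s⟩) := by
    intro a b hab
    apply hvinj
    have := congrArg e hab
    simp only [OrderIso.apply_symm_apply] at this
    exact congrArg Subtype.val this
  set σ : Equiv.Perm (Fin k) :=
    Equiv.ofBijective _ (Finite.injective_iff_bijective.mp hτinj) with hσ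
  have hiσ : ∀ s, i (σ s) = v s := by
    intro s
    simp only [hσ, Equiv.ofBijective_apply, hi]
    rw [OrderIso.apply_symm_apply]
  have himono : StrictMono i := by
    intro a b hab
    exact_mod_cast (T.orderIsoOfFin hTcard).strictMono hab
  -- the hat computation (used for both the construction and for uniqueness)
  have key : ∀ (i' : Fin k → ℕ) (σ' : Equiv.Perm (Fin k)),
      (∀ s, i' (σ' s) = v s) → ∀ s, hat i' σ' s = j s := by
    intro i' σ' hiσ' s
    simp only [hat, hiσ']
    rcases lt_or_ge (s : ℕ) m with hs | hs
    · have hfilter : (Finset.univ.filter (fun r : Fin k => s < r ∧ v r < v s)) =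
          (Finset.univ.filter (fun r : Fin k => m ≤ (r : ℕ) ∧ j r < v s)) := by
        ext r
        simp only [Finset.mem_filter, Finset.mem_univ, true_and]
        constructor
        · rintro ⟨hsr, hvr⟩
          rcases lt_or_ge (r : ℕ) m with hrm | hrm
          · exact absurd hvr (by have := hv_mono1 s r hsr hrm; omega)
          · exact ⟨hrm, by rw [← hv_ge r hrm]; exact hvr⟩
        · rintro ⟨hrm, hjr⟩
          have hsr : s < r := by
            rw [Fin.lt_def]; omega
          exact ⟨hsr, by rw [hv_ge r hrm]; exact hjr⟩
      rw [hfilter]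
      have := hv_lt s hs
      simp only [fc, gc] at this ⊢
      exact this
    · have hfilter : (Finset.univ.filter (fun r : Fin k => s < r ∧ v r < v s)) = ∅ := by
        apply Finset.filter_false_of_mem
        intro r _
        rintro ⟨hsr, hvr⟩
        exact absurd hvr (by have := hv_mono2 s r hs hsr; omega)
      rw [hfilter]
      simp [hv_ge s hs]
  refine ⟨(i, σ), ⟨himono, ?_, ?_, key i σ hiσ⟩, ?_⟩
  · intro a b _ hab hbm
    simp only [hiσ]
    exact hv_mono1 a b hab hbm
  · intro a b ham hab _
    simp only [hiσ]
    exact hv_mono2 a b ham hab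
  · -- uniqueness
    rintro ⟨i', σ'⟩ ⟨hmono', hb1, hb2, hhat⟩
    set w : Fin k → ℕ := fun s => i' (σ' s) with hw
    have hwinj : Function.Injective w :=
      (hmono'.injective).comp σ'.injective
    -- second block
    have hw_ge : ∀ s : Fin k, m ≤ (s : ℕ) → w s = j s := by
      intro s hs
      have hfilter : (Finset.univ.filter (fun r : Fin k => s < r ∧ i' (σ' r) < i' (σ' s))) = ∅ := by
        apply Finset.filter_false_of_mem
        intro r _
        rintro ⟨hsr, hvr⟩
        exact absurd hvr (asymm (hb2 s r hs hsr r.isLt))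
      have := hhat s
      simp only [hat, hfilter, Finset.card_empty, Nat.sub_zero] at this
      exact this
    -- first block
    have hw_eq : w = v := by
      funext s
      rcases lt_or_ge (s : ℕ) m with hs | hs
      · have hfilter : (Finset.univ.filter (fun r : Fin k => s < r ∧ i' (σ' r) < i' (σ' s))) =
            (Finset.univ.filter (fun r : Fin k => m ≤ (r : ℕ) ∧ j r < w s)) := by
          ext r
          simp only [Finset.mem_filter, Finset.mem_univ, true_and]
          constructor
          · rintro ⟨hsr, hvr⟩
            rcases lt_or_ge (r : ℕ) m with hrm | hrm
            · exact absurd hvr (asymm (hb1 s r (by omega) hsr hrm))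
            · exact ⟨hrm, lt_of_eq_of_lt (hw_ge r hrm).symm hvr⟩
          · rintro ⟨hrm, hjr⟩
            have hsr : s < r := by rw [Fin.lt_def]; omega
            exact ⟨hsr, lt_of_eq_of_lt (hw_ge r hrm) hjr⟩
        have hfc : fc m j (w s) = j s := by
          have := hhat s
          simp only [hat, hfilter] at this
          simp only [fc, gc]
          exact this
        have hnotJ : ¬∃ r : Fin k, m ≤ (r : ℕ) ∧ j r = w s := by
          rintro ⟨r, hrm, hjr⟩
          have : w r = w s := by rw [hw_ge r hrm]; exact hjr
          have := hwinj this
          omega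
        exact hv_char s (w s) hs hfc hnotJ
      · rw [hw_ge s hs, hv_ge s hs]
    -- i' = i
    have hieq : i' = i := by
      have hrange : Set.range i' = Set.range i := by
        have e1 : Set.range i' = Set.range w := by
          rw [hw]; exact (σ'.surjective.range_comp i').symm
        have e2 : Set.range i = Set.range v := by
          have : v = fun s => i (σ s) := funext fun s => (hiσ s).symm
          rw [this]; exact (σ.surjective.range_comp i).symm
        rw [e1, e2, hw_eq]
      haveI : WellFoundedLT (Fin k) := Finite.to_wellFoundedLT
      exact (StrictMono.range_inj (f := i') (g := i) hmono' himono).mp hrange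
    have hσeq : σ' = σ := by
      apply Equiv.ext
      intro s
      apply himono.injective
      calc i (σ' s) = i' (σ' s) := by rw [hieq]
        _ = v s := congrFun hw_eq s
        _ = i (σ s) := (hiσ s).symm
    simp [Prod.ext_iff, hieq, hσeq]


end Paper
end

section
/- Let n ≥ 0 and suppose the sequence (0,1,…,n) is partitioned, in order, into consecutive blocks a_1, b_1, a_2, b_2, …, a_s, b_s, a_{s+1} (each block a set of consecutive integers, blocks possibly empty). Let σ be the permutation of {0,1,…,n} that rearranges the sequence of blocks (a_1, b_1, a_2, b_2, …, a_s, b_s, a_{s+1}) into (a_1, a_2, …, a_s, a_{s+1}, b_1, b_2, …, b_s), preserving the order of elements within each block. Then the number of inversions of σ equals |a_2|·|b_1| + |a_3|·(|b_1|+|b_2|) + … + |a_s|·(|b_1|+…+|b_{s−1}|) + |a_{s+1}|·(|b_1|+…+|b_s|), where |c| denotes the number of elements of the block c. -/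
namespace Paper

/-- The starting position, in the original sequence `(0, 1, …, n)`, of the block `a_{i+1}`
in the partition into consecutive blocks `a_1, b_1, a_2, b_2, …, a_s, b_s, a_{s+1}`,
where `a, b : ℕ → ℕ` give the sizes of the blocks (`a i = |a_{i+1}|`, `b i = |b_{i+1}|`). -/
def blockStartA (a b : ℕ → ℕ) (i : ℕ) : ℕ := ∑ l ∈ Finset.range i, (a l + b l)

/-- The rearranged sequence `(a_1, a_2, …, a_s, a_{s+1}, b_1, b_2, …, b_s)`, as the list of
its entries. -/
def outList (s : ℕ) (a b : ℕ → ℕ) : List ℕ :=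
  (((List.range (s + 1)).map
      (fun i => (List.range (a i)).map (fun o => blockStartA a b i + o))).flatten) ++
  (((List.range s).map
      (fun i => (List.range (b i)).map (fun o => blockStartA a b i + a i + o))).flatten)

/-- The number of inversions of a sequence of naturals: the number of pairs of positions
`p < q` whose entries are out of order. -/
def invCount (l : List ℕ) : ℕ :=
  ((Finset.range l.length ×ˢ Finset.range l.length).filter
    (fun pq => pq.1 < pq.2 ∧ l.getD pq.2 0 < l.getD pq.1 0)).card

/-! ### Auxiliary lemmas -/

lemma list_sum_range (n : ℕ) (f : ℕ → ℕ) :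
    ((List.range n).map f).sum = ∑ i ∈ Finset.range n, f i := rfl

lemma sum_getD (l : List ℕ) (f : ℕ → ℕ) :
    ∑ p ∈ Finset.range l.length, f (l.getD p 0) = (l.map f).sum := by
  induction l with
  | nil => simp
  | cons x t ih =>
    rw [List.length_cons, Finset.sum_range_succ']
    simp only [List.getD_cons_succ, List.getD_cons_zero]
    rw [ih, List.map_cons, List.sum_cons]
    omega

lemma count_lt_eq (l : List ℕ) (x : ℕ) :
    (∑ q ∈ Finset.range l.length, if l.getD q 0 < x then 1 else 0) =
      l.countP (fun y => y < x) := by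
  induction l with
  | nil => simp
  | cons z t ih =>
    rw [List.length_cons, Finset.sum_range_succ', List.countP_cons]
    simp only [List.getD_cons_succ, List.getD_cons_zero, ih]
    by_cases h : z < x <;> simp [h]

lemma sum_split (n1 n2 : ℕ) (g : ℕ → ℕ) :
    ∑ p ∈ Finset.range (n1 + n2), g p =
      ∑ p ∈ Finset.range n1, g p + ∑ p ∈ Finset.range n2, g (n1 + p) := by
  induction n2 with
  | zero => simp
  | succ k ih =>
    rw [← Nat.add_assoc, Finset.sum_range_succ, ih, Finset.sum_range_succ]
    omega

lemma sorted_getD_lt {l : List ℕ} (h : l.Pairwise (· < ·)) {p q : ℕ}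
    (hpq : p < q) (hq : q < l.length) : l.getD p 0 < l.getD q 0 := by
  rw [List.getD_eq_getElem l 0 (lt_trans hpq hq), List.getD_eq_getElem l 0 hq]
  exact List.pairwise_iff_getElem.mp h p q _ hq hpq

lemma invCount_append (l1 l2 : List ℕ) (h1 : l1.Pairwise (· < ·))
    (h2 : l2.Pairwise (· < ·)) :
    invCount (l1 ++ l2) = (l1.map (fun x => l2.countP (fun y => y < x))).sum := by
  classical
  have hlen : (l1 ++ l2).length = l1.length + l2.length := List.length_append
  have key1 : ∀ p < l1.length, (l1 ++ l2).getD p 0 = l1.getD p 0 := by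
    intro p hp; exact List.getD_append _ _ _ _ hp
  have key2 : ∀ q, (l1 ++ l2).getD (l1.length + q) 0 = l2.getD q 0 := by
    intro q
    rw [List.getD_append_right _ _ _ _ (Nat.le_add_right _ _), Nat.add_sub_cancel_left]
  rw [invCount, Finset.card_filter, Finset.sum_product, hlen]
  rw [sum_split]
  have T11 : ∀ p ∈ Finset.range l1.length,
      (∑ q ∈ Finset.range l1.length,
        if p < q ∧ (l1 ++ l2).getD q 0 < (l1 ++ l2).getD p 0 then 1 else 0) = 0 := by
    intro p hp
    apply Finset.sum_eq_zero
    intro q hq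
    rw [Finset.mem_range] at hp hq
    rw [if_neg]
    rintro ⟨hpq, hlt⟩
    rw [key1 p hp, key1 q hq] at hlt
    exact absurd (sorted_getD_lt h1 hpq hq) (by omega)
  have T21 : ∀ p ∈ Finset.range l2.length,
      (∑ q ∈ Finset.range l1.length,
        if l1.length + p < q ∧ (l1 ++ l2).getD q 0 < (l1 ++ l2).getD (l1.length + p) 0
          then 1 else 0) = 0 := by
    intro p hp
    apply Finset.sum_eq_zero
    intro q hq
    rw [Finset.mem_range] at hq
    rw [if_neg]
    rintro ⟨hpq, -⟩
    omega
  have T22 : ∀ p ∈ Finset.range l2.length,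
      (∑ q ∈ Finset.range l2.length,
        if l1.length + p < l1.length + q ∧
          (l1 ++ l2).getD (l1.length + q) 0 < (l1 ++ l2).getD (l1.length + p) 0
          then 1 else 0) = 0 := by
    intro p hp
    apply Finset.sum_eq_zero
    intro q hq
    rw [Finset.mem_range] at hq
    rw [if_neg]
    rintro ⟨hpq, hlt⟩
    rw [key2 p, key2 q] at hlt
    have hpq' : p < q := by omega
    exact absurd (sorted_getD_lt h2 hpq' hq) (by omega)
  have A1 : ∑ p ∈ Finset.range l1.length,
      (∑ q ∈ Finset.range (l1.length + l2.length),
        if p < q ∧ (l1 ++ l2).getD q 0 < (l1 ++ l2).getD p 0 then 1 else 0) =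
      ∑ p ∈ Finset.range l1.length, l2.countP (fun y => y < l1.getD p 0) := by
    apply Finset.sum_congr rfl
    intro p hp
    rw [sum_split, T11 p hp, zero_add, ← count_lt_eq l2 (l1.getD p 0)]
    apply Finset.sum_congr rfl
    intro q hq
    rw [Finset.mem_range] at hp
    rw [key1 p hp, key2 q]
    congr 1
    simp only [eq_iff_iff, and_iff_right_iff_imp]
    intro _
    omega
  have A2 : ∑ p ∈ Finset.range l2.length,
      (∑ q ∈ Finset.range (l1.length + l2.length),
        if l1.length + p < q ∧ (l1 ++ l2).getD q 0 < (l1 ++ l2).getD (l1.length + p) 0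
          then 1 else 0) = 0 := by
    apply Finset.sum_eq_zero
    intro p hp
    rw [sum_split, T21 p hp, T22 p hp, add_zero]
  rw [A1, A2, add_zero]
  exact sum_getD l1 (fun x => l2.countP (fun y => y < x))

section Blocks

variable (a b : ℕ → ℕ)

local notation "S" => blockStartA a b

lemma S_succ (i : ℕ) : S (i + 1) = S i + (a i + b i) := Finset.sum_range_succ _ i

lemma S_mono : Monotone S := by
  intro i j hij
  exact Finset.sum_le_sum_of_subset (Finset.range_subset_range.mpr hij)

lemma S_keyAB {i j : ℕ} (h : i < j) : S i + a i + b i ≤ S j := by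
  have h1 := S_succ a b i
  have h2 := S_mono a b (show i + 1 ≤ j from h)
  omega

lemma S_keyAA {i j : ℕ} (h : i ≤ j) : S i + a i ≤ S j + a j := by
  rcases eq_or_lt_of_le h with rfl | h
  · exact le_refl _
  · have := S_keyAB a b h; omega

lemma sortedA (s : ℕ) :
    (((List.range (s + 1)).map
      (fun i => (List.range (a i)).map (fun o => S i + o))).flatten).Pairwise (· < ·) := by
  rw [List.pairwise_flatten]
  constructor
  · intro l hl
    rw [List.mem_map] at hl
    obtain ⟨i, -, rfl⟩ := hl
    rw [List.pairwise_map]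
    exact (List.pairwise_lt_range).imp (fun h => by omega)
  · rw [List.pairwise_map]
    apply (List.pairwise_lt_range).imp
    intro i j hij x hx y hy
    rw [List.mem_map] at hx hy
    obtain ⟨o, ho, rfl⟩ := hx
    obtain ⟨o', ho', rfl⟩ := hy
    rw [List.mem_range] at ho ho'
    have := S_keyAB a b hij
    omega

lemma sortedB (s : ℕ) :
    (((List.range s).map
      (fun i => (List.range (b i)).map (fun o => S i + a i + o))).flatten).Pairwise (· < ·) := by
  rw [List.pairwise_flatten]
  constructor
  · intro l hl
    rw [List.mem_map] at hl
    obtain ⟨i, -, rfl⟩ := hl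
    rw [List.pairwise_map]
    exact (List.pairwise_lt_range).imp (fun h => by omega)
  · rw [List.pairwise_map]
    apply (List.pairwise_lt_range).imp
    intro i j hij x hx y hy
    rw [List.mem_map] at hx hy
    obtain ⟨o, ho, rfl⟩ := hx
    obtain ⟨o', ho', rfl⟩ := hy
    rw [List.mem_range] at ho ho'
    have h1 := S_keyAB a b hij
    have h2 := S_keyAA a b (le_of_lt hij)
    omega

lemma perm_rearrange (w x y z : List ℕ) :
    ((w ++ x) ++ (y ++ z)).Perm ((w ++ y) ++ (z ++ x)) := by
  rw [List.perm_iff_count]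
  intro c
  simp only [List.count_append]
  omega

lemma perm_aux (s : ℕ) : (outList s a b).Perm (List.range (S s + a s)) := by
  induction s with
  | zero =>
    have h1 : List.range 1 = [0] := rfl
    simp [outList, blockStartA, h1]
  | succ s ih =>
    have hout : outList (s + 1) a b =
        ((((List.range (s + 1)).map
            (fun i => (List.range (a i)).map (fun o => S i + o))).flatten ++
          (List.range (a (s + 1))).map (fun o => S (s + 1) + o)) ++
         (((List.range s).map
            (fun i => (List.range (b i)).map (fun o => S i + a i + o))).flatten ++
          (List.range (b s)).map (fun o => S s + a s + o))) := by
      rw [outList, List.range_succ (n := s + 1), List.range_succ (n := s)]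
      simp [List.flatten_append]
    rw [hout]
    refine (perm_rearrange _ _ _ _).trans ?_
    have hBA : ((List.range (b s)).map (fun o => S s + a s + o) ++
        (List.range (a (s + 1))).map (fun o => S (s + 1) + o)) =
        (List.range (b s + a (s + 1))).map (fun o => (S s + a s) + o) := by
      rw [List.range_add, List.map_append, List.map_map]
      congr 1
      apply List.map_congr_left
      intro o ho
      simp only [Function.comp_apply]
      have := S_succ a b s
      omega
    rw [hBA]
    refine (ih.append_right _).trans ?_
    have : (List.range (S s + a s) ++
        (List.range (b s + a (s + 1))).map (fun o => (S s + a s) + o)) =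
        List.range (S s + a s + (b s + a (s + 1))) := (List.range_add).symm
    rw [this]
    have : S s + a s + (b s + a (s + 1)) = S (s + 1) + a (s + 1) := by
      have := S_succ a b s; omega
    rw [this]

end Blocks

/-- Partition the sequence `(0, 1, …, n)`, in order, into consecutive
(possibly empty) blocks `a_1, b_1, a_2, b_2, …, a_s, b_s, a_{s+1}` of sizes `a 0, b 0, a 1,
b 1, …, a (s-1), b (s-1), a s`, and let `σ` be the permutation rearranging the blocks into
`(a_1, a_2, …, a_s, a_{s+1}, b_1, b_2, …, b_s)` (preserving the order of the elements inside
each block); its rearranged sequence is `outList s a b`, which is a permutation of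
`(0, 1, …, n)`.  Then the number of inversions of `σ` equals
`|a_2|·|b_1| + |a_3|·(|b_1|+|b_2|) + … + |a_{s+1}|·(|b_1|+…+|b_s|)`. -/
theorem inversions_of_block_shuffle
    (n s : ℕ) (a b : ℕ → ℕ)
    (hsum : (∑ l ∈ Finset.range (s + 1), a l) + (∑ l ∈ Finset.range s, b l) = n + 1) :
    List.Perm (outList s a b) (List.range (n + 1)) ∧
    invCount (outList s a b) =
      ∑ i ∈ Finset.range (s + 1), a i * (∑ j ∈ Finset.range i, b j) := by
  have htot : blockStartA a b s + a s = n + 1 := by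
    rw [blockStartA, Finset.sum_add_distrib]
    rw [Finset.sum_range_succ] at hsum
    omega
  constructor
  · have := perm_aux a b s
    rwa [htot] at this
  · rw [outList, invCount_append _ _ (sortedA a b s) (sortedB a b s)]
    rw [List.map_flatten, List.sum_flatten, List.map_map, List.map_map, list_sum_range]
    apply Finset.sum_congr rfl
    intro i hi
    rw [Finset.mem_range] at hi
    simp only [Function.comp_apply, List.map_map]
    have hval : ∀ o < a i,
        (((List.range s).map
          (fun j => (List.range (b j)).map (fun o => blockStartA a b j + a j + o))).flatten).countP
          (fun y => y < blockStartA a b i + o) = ∑ j ∈ Finset.range i, b j := by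
      intro o ho
      rw [List.countP_flatten, List.map_map, list_sum_range]
      have hterm : ∀ j ∈ Finset.range s,
          ((List.countP (fun y => decide (y < blockStartA a b i + o))) ∘
            fun j => (List.range (b j)).map (fun o => blockStartA a b j + a j + o)) j =
          if j < i then b j else 0 := by
        intro j hj
        simp only [Function.comp_apply, List.countP_map]
        by_cases hji : j < i
        · rw [if_pos hji]
          have : List.countP
              ((fun y => decide (y < blockStartA a b i + o)) ∘
                fun o => blockStartA a b j + a j + o) (List.range (b j)) =
              (List.range (b j)).length := by
            rw [List.countP_eq_length]
            intro o' ho'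
            rw [List.mem_range] at ho'
            simp only [Function.comp_apply, decide_eq_true_eq]
            have := S_keyAB a b hji
            omega
          rw [this, List.length_range]
        · rw [if_neg hji]
          rw [List.countP_eq_zero]
          intro o' ho'
          rw [List.mem_range] at ho'
          simp only [Function.comp_apply, decide_eq_true_eq]
          have := S_keyAA a b (le_of_not_gt hji)
          omega
      rw [Finset.sum_congr rfl hterm, ← Finset.sum_filter]
      have : (Finset.range s).filter (· < i) = Finset.range i := by
        ext j
        simp only [Finset.mem_filter, Finset.mem_range]
        omega
      rw [this]
    have : ((List.range (a i)).map
        ((fun x =>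
          (((List.range s).map
            (fun j => (List.range (b j)).map (fun o => blockStartA a b j + a j + o))).flatten).countP
            (fun y => y < x)) ∘ fun o => blockStartA a b i + o)) =
        (List.range (a i)).map (fun _ => ∑ j ∈ Finset.range i, b j) := by
      apply List.map_congr_left
      intro o ho
      rw [List.mem_range] at ho
      exact hval o ho
    rw [this, list_sum_range, Finset.sum_const, Finset.card_range, smul_eq_mul]
end Paper
end
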